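/- Let s, t ∈ ℝ with 0 ≤ s ≤ 4 and t ≥ −1. Then for all P, Q ∈ Γ_n with r ≤ p_i/q_i ≤ R for all i: (1/R^{s+1}) ((R+1)/2)^{s−t−1} ((4−s)R + s) Ω_t(Q||P) ≤ ζ_s(Q||P) ≤ (1/r^{s+1}) ((r+1)/2)^{s−t−1} ((4−s)r + s) Ω_t(Q||P). -/

import Mathlib

open Real Finset

/-- Relative information of type `s` (generalized Kullback-Leibler divergence). -/
noncomputable def Phi (n : ℕ) (s : ℝ) (p q : Fin n → ℝ) : ℝ :=
  if s = 0 then ∑ i, q i * Real.log (q i / p i)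
  else if s = 1 then ∑ i, p i * Real.log (p i / q i)
  else (s * (s - 1))⁻¹ * ((∑ i, (p i) ^ s * (q i) ^ (1 - s)) - 1)

/-- Unified relative JS and AG divergence of type `s`. -/
noncomputable def Omega (n : ℕ) (s : ℝ) (p q : Fin n → ℝ) : ℝ :=
  if s = 0 then ∑ i, p i * Real.log (2 * p i / (p i + q i))
  else if s = 1 then ∑ i, ((p i + q i) / 2) * Real.log ((p i + q i) / (2 * p i))
  else (s * (s - 1))⁻¹ * ((∑ i, p i * ((p i + q i) / (2 * p i)) ^ s) - 1)

/-- Relative J-divergence of type `s`. -/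
noncomputable def zeta (n : ℕ) (s : ℝ) (p q : Fin n → ℝ) : ℝ :=
  if s = 1 then ∑ i, (p i - q i) * Real.log ((p i + q i) / (2 * q i))
  else (s - 1)⁻¹ * ∑ i, (p i - q i) * ((p i + q i) / (2 * q i)) ^ (s - 1)

open Set

set_option linter.unreachableTactic false
set_option linter.unusedTactic false

noncomputable def gg (s y : ℝ) : ℝ :=
  if s = 1 then (1-y) * (Real.log ((1+y)/2) - Real.log y)
  else (s-1)⁻¹ * ((1-y) * (((1+y)/2)^(s-1) * y^(1-s)))

noncomputable def gg1 (s y : ℝ) : ℝ :=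
  if s = 1 then -(Real.log ((1+y)/2) - Real.log y) + (1-y) * ((1+y)⁻¹ - y⁻¹)
  else (s-1)⁻¹ * (-(((1+y)/2)^(s-1) * y^(1-s)) +
    (1-y) * ((s-1)/2 * ((1+y)/2)^(s-2) * y^(1-s) + ((1+y)/2)^(s-1) * ((1-s) * y^(-s))))

noncomputable def G2 (s y : ℝ) : ℝ := (1/4) * ((1+y)/2)^(s-3) * y^(-(s+1)) * ((4-s)*y+s)

noncomputable def ff (t y : ℝ) : ℝ :=
  if t = 0 then -Real.log ((1+y)/2)
  else if t = 1 then ((1+y)/2) * Real.log ((1+y)/2)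
  else (t*(t-1))⁻¹ * (((1+y)/2)^t - 1)

noncomputable def ff1 (t y : ℝ) : ℝ :=
  if t = 0 then -(1+y)⁻¹
  else if t = 1 then 1/2 * Real.log ((1+y)/2) + 1/2
  else (2*(t-1))⁻¹ * ((1+y)/2)^(t-1)

noncomputable def F2 (t y : ℝ) : ℝ := (1/4) * ((1+y)/2)^(t-2)

lemma hasDerivAt_urpow (c : ℝ) {y : ℝ} (hy : 0 < y) :
    HasDerivAt (fun x : ℝ => ((1+x)/2)^c) (c/2 * ((1+y)/2)^(c-1)) y := by
  have hu : (0:ℝ) < (1+y)/2 := by linarith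
  have h : HasDerivAt (fun x : ℝ => (1+x)/2) (1/2) y := by
    simpa using (((hasDerivAt_id y).const_add (1:ℝ)).div_const 2)
  have := h.rpow_const (p := c) (Or.inl hu.ne')
  convert this using 1
  ring

lemma hasDerivAt_yrpow (c : ℝ) {y : ℝ} (hy : 0 < y) :
    HasDerivAt (fun x : ℝ => x^c) (c * y^(c-1)) y :=
  Real.hasDerivAt_rpow_const (Or.inl hy.ne')

lemma hasDerivAt_logu {y : ℝ} (hy : 0 < y) :
    HasDerivAt (fun x : ℝ => Real.log ((1+x)/2)) ((1+y)⁻¹) y := by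
  have hu : (0:ℝ) < (1+y)/2 := by linarith
  have h : HasDerivAt (fun x : ℝ => (1+x)/2) (1/2) y := by
    simpa using (((hasDerivAt_id y).const_add (1:ℝ)).div_const 2)
  have := h.log hu.ne'
  convert this using 1
  field_simp


lemma convexOn_aux {r R : ℝ} (hr : 0 < r) {f f1 f2 : ℝ → ℝ}
    (hd1 : ∀ y : ℝ, 0 < y → HasDerivAt f (f1 y) y)
    (hd2 : ∀ y : ℝ, 0 < y → HasDerivAt f1 (f2 y) y)
    (hnn : ∀ y ∈ Set.Ioo r R, 0 ≤ f2 y) : ConvexOn ℝ (Set.Icc r R) f := by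
  have hev : ∀ x : ℝ, 0 < x → deriv f =ᶠ[nhds x] f1 := by
    intro x hx
    filter_upwards [Ioi_mem_nhds hx] with z hz
    exact (hd1 z hz).deriv
  apply convexOn_of_deriv2_nonneg (convex_Icc r R)
  · intro x hx
    exact (hd1 x (lt_of_lt_of_le hr hx.1)).differentiableAt.continuousAt.continuousWithinAt
  · rw [interior_Icc]; intro x hx
    exact (hd1 x (hr.trans hx.1)).differentiableAt.differentiableWithinAt
  · rw [interior_Icc]; intro x hx
    have hx0 : (0:ℝ) < x := hr.trans hx.1
    exact (((hd2 x hx0).differentiableAt).congr_of_eventuallyEq (hev x hx0)).differentiableWithinAt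
  · rw [interior_Icc]; intro x hx
    have hx0 : (0:ℝ) < x := hr.trans hx.1
    have h2 : deriv^[2] f x = deriv (deriv f) x := rfl
    rw [h2, (hev x hx0).deriv_eq, (hd2 x hx0).deriv]
    exact hnn x hx

lemma antitoneOn_aux {r R : ℝ} (hr : 0 < r) {f f1 : ℝ → ℝ}
    (hd : ∀ y : ℝ, 0 < y → HasDerivAt f (f1 y) y)
    (hnp : ∀ y ∈ Set.Ioo r R, f1 y ≤ 0) : AntitoneOn f (Set.Icc r R) := by
  apply antitoneOn_of_deriv_nonpos (convex_Icc r R)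
  · intro x hx
    exact (hd x (lt_of_lt_of_le hr hx.1)).differentiableAt.continuousAt.continuousWithinAt
  · rw [interior_Icc]; intro x hx
    exact (hd x (hr.trans hx.1)).differentiableAt.differentiableWithinAt
  · rw [interior_Icc]; intro x hx
    rw [(hd x (hr.trans hx.1)).deriv]
    exact hnp x hx

lemma gg_eq (s : ℝ) (hs : ¬ s = 1) : gg s = fun y : ℝ =>
    (s-1)⁻¹ * ((1-y) * (((1+y)/2)^(s-1) * y^(1-s))) := funext fun y => by
  simp [gg, hs]

lemma gg_eq1 : gg 1 = fun y : ℝ => (1-y) * (Real.log ((1+y)/2) - Real.log y) :=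
  funext fun y => by simp [gg]

lemma gg1_eq (s : ℝ) (hs : ¬ s = 1) : gg1 s = fun y : ℝ =>
    (s-1)⁻¹ * (-(((1+y)/2)^(s-1) * y^(1-s)) +
    (1-y) * ((s-1)/2 * ((1+y)/2)^(s-2) * y^(1-s) + ((1+y)/2)^(s-1) * ((1-s) * y^(-s)))) :=
  funext fun y => by simp [gg1, hs]

lemma gg1_eq1 : gg1 1 = fun y : ℝ =>
    -(Real.log ((1+y)/2) - Real.log y) + (1-y) * ((1+y)⁻¹ - y⁻¹) :=
  funext fun y => by simp [gg1]

lemma gg_hasDeriv (s : ℝ) {y : ℝ} (hy : 0 < y) : HasDerivAt (gg s) (gg1 s y) y := by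
  have h1y : HasDerivAt (fun x : ℝ => 1 - x) (-1) y := by
    simpa using ((hasDerivAt_id y).const_sub (1:ℝ))
  by_cases hs : s = 1
  · subst hs
    rw [gg_eq1, gg1_eq1]
    have hlog : HasDerivAt (fun x : ℝ => Real.log ((1+x)/2) - Real.log x)
        ((1+y)⁻¹ - y⁻¹) y := (hasDerivAt_logu hy).sub (Real.hasDerivAt_log hy.ne')
    have := h1y.fun_mul hlog
    refine this.congr_deriv ?_
    ring
  · rw [gg_eq s hs, gg1_eq s hs]
    have hU := hasDerivAt_urpow (s-1) hy
    rw [show s-1-1 = s-2 by ring] at hU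
    have hY := hasDerivAt_yrpow (1-s) hy
    rw [show 1-s-1 = -s by ring] at hY
    have := (h1y.fun_mul (hU.fun_mul hY)).const_mul ((s-1)⁻¹)
    refine this.congr_deriv ?_
    ring

lemma gg1_hasDeriv (s : ℝ) {y : ℝ} (hy : 0 < y) : HasDerivAt (gg1 s) (G2 s y) y := by
  have hu : (0:ℝ) < (1+y)/2 := by linarith
  have h1y : HasDerivAt (fun x : ℝ => 1 - x) (-1) y := by
    simpa using ((hasDerivAt_id y).const_sub (1:ℝ))
  by_cases hs : s = 1
  · subst hs
    rw [gg1_eq1]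
    have hlog : HasDerivAt (fun x : ℝ => -(Real.log ((1+x)/2) - Real.log x))
        (-((1+y)⁻¹ - y⁻¹)) y := ((hasDerivAt_logu hy).sub (Real.hasDerivAt_log hy.ne')).neg
    have hy1 : (0:ℝ) < 1 + y := by linarith
    have hinv1 : HasDerivAt (fun x : ℝ => (1+x)⁻¹) (-1/(1+y)^2) y := by
      have h : HasDerivAt (fun x : ℝ => 1+x) (1:ℝ) y := by
        simpa using ((hasDerivAt_id y).const_add (1:ℝ))
      simpa using h.fun_inv hy1.ne'
    have hinv2 : HasDerivAt (fun x : ℝ => x⁻¹) (-(y^2)⁻¹) y := hasDerivAt_inv hy.ne'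
    have := hlog.fun_add (h1y.fun_mul (hinv1.fun_sub hinv2))
    refine this.congr_deriv ?_
    rw [G2]
    have e1 : y ^ (-((1:ℝ)+1)) = (y^2)⁻¹ := by
      rw [show (-((1:ℝ)+1)) = -((2:ℕ):ℝ) by norm_num, Real.rpow_neg hy.le, Real.rpow_natCast]
    have e2 : ((1+y)/2) ^ ((1:ℝ)-3) = (((1+y)/2)^2)⁻¹ := by
      rw [show ((1:ℝ)-3) = -((2:ℕ):ℝ) by norm_num, Real.rpow_neg hu.le, Real.rpow_natCast]
    rw [e1, e2]
    field_simp
    ring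
  · rw [gg1_eq s hs]
    have hs1 : s - 1 ≠ 0 := sub_ne_zero.mpr hs
    have hU := hasDerivAt_urpow (s-1) hy
    rw [show s-1-1 = s-2 by ring] at hU
    have hUd := hasDerivAt_urpow (s-2) hy
    rw [show s-2-1 = s-3 by ring] at hUd
    have hY := hasDerivAt_yrpow (1-s) hy
    rw [show 1-s-1 = -s by ring] at hY
    have hYd := hasDerivAt_yrpow (-s) hy
    rw [show -s-1 = -(s+1) by ring] at hYd
    have t2 := (hUd.const_mul ((s-1)/2 : ℝ)).fun_mul hY
    have t4 := hU.fun_mul (hYd.const_mul ((1-s) : ℝ))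
    have big := (((hU.fun_mul hY).fun_neg).fun_add (h1y.fun_mul (t2.fun_add t4))).const_mul ((s-1)⁻¹)
    refine big.congr_deriv ?_
    rw [G2]
    have e1 : ((1+y)/2)^(s-1) = ((1+y)/2)^(s-3) * ((1+y)/2) * ((1+y)/2) := by
      rw [show s-1 = s-3+1+1 by ring, Real.rpow_add_one hu.ne', Real.rpow_add_one hu.ne']
    have e2 : ((1+y)/2)^(s-2) = ((1+y)/2)^(s-3) * ((1+y)/2) := by
      rw [show s-2 = s-3+1 by ring, Real.rpow_add_one hu.ne']
    have e3 : y^(1-s) = y^(-(s+1)) * y * y := by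
      rw [show 1-s = -(s+1)+1+1 by ring, Real.rpow_add_one hy.ne', Real.rpow_add_one hy.ne']
    have e4 : y^(-s) = y^(-(s+1)) * y := by
      rw [show -s = -(s+1)+1 by ring, Real.rpow_add_one hy.ne']
    rw [e1, e2, e3, e4]
    field_simp
    ring

lemma ff_eq0 : ff 0 = fun y : ℝ => -Real.log ((1+y)/2) := funext fun y => by simp [ff]
lemma ff_eq1 : ff 1 = fun y : ℝ => ((1+y)/2) * Real.log ((1+y)/2) := funext fun y => by
  simp [ff]
lemma ff_eqg (t : ℝ) (h0 : ¬ t = 0) (h1 : ¬ t = 1) :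
    ff t = fun y : ℝ => (t*(t-1))⁻¹ * (((1+y)/2)^t - 1) := funext fun y => by simp [ff, h0, h1]
lemma ff1_eq0 : ff1 0 = fun y : ℝ => -(1+y)⁻¹ := funext fun y => by simp [ff1]
lemma ff1_eq1 : ff1 1 = fun y : ℝ => 1/2 * Real.log ((1+y)/2) + 1/2 := funext fun y => by
  simp [ff1]
lemma ff1_eqg (t : ℝ) (h0 : ¬ t = 0) (h1 : ¬ t = 1) :
    ff1 t = fun y : ℝ => (2*(t-1))⁻¹ * ((1+y)/2)^(t-1) := funext fun y => by simp [ff1, h0, h1]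

lemma ff_hasDeriv (t : ℝ) {y : ℝ} (hy : 0 < y) : HasDerivAt (ff t) (ff1 t y) y := by
  have hy1 : (0:ℝ) < 1 + y := by linarith
  by_cases h0 : t = 0
  · subst h0; rw [ff_eq0, ff1_eq0]
    exact (hasDerivAt_logu hy).neg
  by_cases h1 : t = 1
  · subst h1; rw [ff_eq1, ff1_eq1]
    have hu : HasDerivAt (fun x : ℝ => (1+x)/2) (1/2) y := by
      simpa using (((hasDerivAt_id y).const_add (1:ℝ)).div_const 2)
    have := hu.fun_mul (hasDerivAt_logu hy)
    refine this.congr_deriv ?_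
    field_simp
  · rw [ff_eqg t h0 h1, ff1_eqg t h0 h1]
    have ht1 : t - 1 ≠ 0 := sub_ne_zero.mpr h1
    have := ((hasDerivAt_urpow t hy).sub_const 1).const_mul ((t*(t-1))⁻¹)
    refine this.congr_deriv ?_
    field_simp

lemma ff1_hasDeriv (t : ℝ) {y : ℝ} (hy : 0 < y) : HasDerivAt (ff1 t) (F2 t y) y := by
  have hy1 : (0:ℝ) < 1 + y := by linarith
  have hu0 : (0:ℝ) < (1+y)/2 := by linarith
  by_cases h0 : t = 0
  · subst h0; rw [ff1_eq0]
    have h : HasDerivAt (fun x : ℝ => 1+x) (1:ℝ) y := by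
      simpa using ((hasDerivAt_id y).const_add (1:ℝ))
    have := (h.fun_inv hy1.ne').fun_neg
    refine this.congr_deriv ?_
    rw [F2, show (0:ℝ)-2 = -((2:ℕ):ℝ) by norm_num, Real.rpow_neg hu0.le, Real.rpow_natCast]
    field_simp
    ring
  by_cases h1 : t = 1
  · subst h1; rw [ff1_eq1]
    have := (hasDerivAt_logu hy).const_mul (1/2 : ℝ)
    have h2 := this.add_const (1/2 : ℝ)
    refine h2.congr_deriv ?_
    rw [F2, show (1:ℝ)-2 = -((1:ℕ):ℝ) by norm_num, Real.rpow_neg hu0.le, Real.rpow_natCast]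
    field_simp
    ring
  · rw [ff1_eqg t h0 h1]
    have ht1 : t - 1 ≠ 0 := sub_ne_zero.mpr h1
    have := (hasDerivAt_urpow (t-1) hy).const_mul ((2*(t-1))⁻¹)
    rw [show t-1-1 = t-2 by ring] at this
    refine this.congr_deriv ?_
    rw [F2]
    field_simp
    ring

noncomputable def hh (s t y : ℝ) : ℝ := ((1+y)/2)^(s-t-1) * y^(-(s+1)) * ((4-s)*y+s)

lemma F2_pos (t : ℝ) {y : ℝ} (hy : 0 < y) : 0 < F2 t y := by
  have hu0 : (0:ℝ) < (1+y)/2 := by linarith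
  rw [F2]
  positivity

lemma G2_eq (s t : ℝ) {y : ℝ} (hy : 0 < y) : G2 s y = hh s t y * F2 t y := by
  have hu0 : (0:ℝ) < (1+y)/2 := by linarith
  rw [G2, hh, F2]
  rw [show ((1+y)/2)^(s-t-1) * y^(-(s+1)) * ((4-s)*y+s) * (1/4 * ((1+y)/2)^(t-2))
      = 1/4 * (((1+y)/2)^(s-t-1) * ((1+y)/2)^(t-2)) * y^(-(s+1)) * ((4-s)*y+s) by ring,
    ← Real.rpow_add hu0, show s-t-1+(t-2) = s-3 by ring]

lemma hh_hasDeriv (s t : ℝ) {y : ℝ} (hy : 0 < y) : HasDerivAt (hh s t)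
    ((((s-t-1)/2 * ((1+y)/2)^(s-t-2) * y^(-(s+1)) +
      ((1+y)/2)^(s-t-1) * (-(s+1) * y^(-(s+1)-1))) * ((4-s)*y+s)) +
      ((1+y)/2)^(s-t-1) * y^(-(s+1)) * (4-s)) y := by
  have hA := hasDerivAt_urpow (s-t-1) hy
  rw [show s-t-1-1 = s-t-2 by ring] at hA
  have hC := hasDerivAt_yrpow (-(s+1)) hy
  have hB : HasDerivAt (fun x : ℝ => (4-s)*x+s) (4-s) y := by
    simpa using ((hasDerivAt_id y).const_mul (4-s)).add_const s
  have := (hA.fun_mul hC).fun_mul hB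
  have hfun : hh s t = fun x : ℝ => ((1+x)/2)^(s-t-1) * x^(-(s+1)) * ((4-s)*x+s) :=
    funext fun x => by simp [hh]
  rw [hfun]
  refine this.congr_deriv ?_ <;> ring

lemma hh_antitone (s t r R : ℝ) (hr : 0 < r) (hs0 : 0 ≤ s) (hs4 : s ≤ 4) (ht : -1 ≤ t) :
    AntitoneOn (hh s t) (Set.Icc r R) := by
  apply antitoneOn_aux hr (fun y hy => hh_hasDeriv s t hy)
  intro y hy
  have hy0 : 0 < y := hr.trans hy.1
  have hu0 : (0:ℝ) < (1+y)/2 := by linarith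
  have e5 : ((1+y)/2)^(s-t-1) = ((1+y)/2)^(s-t-2) * ((1+y)/2) := by
    rw [show s-t-1 = s-t-2+1 by ring, Real.rpow_add_one hu0.ne']
  have e6 : y^(-(s+1)) = y^(-(s+1)-1) * y := by
    rw [← Real.rpow_add_one hy0.ne']
    congr 1
    ring
  have hbr : ((s-t-1)/2 * y + (-(s+1)) * ((1+y)/2)) * ((4-s)*y+s) + ((1+y)/2) * y * (4-s) ≤ 0 := by
    have hB : 0 ≤ (4-s)*y+s := by nlinarith
    have h1 : 0 ≤ (t+1) * (y * ((4-s)*y+s)) :=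
      mul_nonneg (by linarith) (mul_nonneg hy0.le hB)
    have h2 : 0 ≤ s * ((5-s)*y + (s+1)) := by
      have : 0 ≤ (5-s)*y := mul_nonneg (by linarith) hy0.le
      exact mul_nonneg hs0 (by linarith)
    nlinarith [h1, h2]
  have key : (((s-t-1)/2 * ((1+y)/2)^(s-t-2) * y^(-(s+1)) +
      ((1+y)/2)^(s-t-1) * (-(s+1) * y^(-(s+1)-1))) * ((4-s)*y+s)) +
      ((1+y)/2)^(s-t-1) * y^(-(s+1)) * (4-s)
      = (((1+y)/2)^(s-t-2) * y^(-(s+1)-1)) *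
        (((s-t-1)/2 * y + (-(s+1)) * ((1+y)/2)) * ((4-s)*y+s) + ((1+y)/2) * y * (4-s)) := by
    rw [e5, e6]; ring
  rw [key]
  apply mul_nonpos_of_nonneg_of_nonpos _ hbr
  positivity

lemma gg_one (s : ℝ) : gg s 1 = 0 := by unfold gg; split <;> simp

lemma ff_one (t : ℝ) : ff t 1 = 0 := by
  unfold ff
  split
  · norm_num
  · split
    · norm_num
    · norm_num [Real.one_rpow]


lemma Omega_eq {n : ℕ} (t : ℝ) (p q : Fin n → ℝ) (hp : ∀ i, 0 < p i) (hq : ∀ i, 0 < q i)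
    (hq1 : ∑ i, q i = 1) : Omega n t q p = ∑ i, q i * ff t (p i / q i) := by
  have hbase : ∀ i, (1 + p i / q i)/2 = (q i + p i)/(2 * q i) := by
    intro i
    have h := (hq i).ne'
    rw [div_eq_div_iff (by norm_num) (by positivity)]
    field_simp
  by_cases h0 : t = 0
  · subst h0
    rw [Omega, if_pos rfl]
    apply Finset.sum_congr rfl
    intro i _
    rw [ff_eq0]
    simp only
    rw [hbase i, ← Real.log_inv, inv_div]
  by_cases h1 : t = 1
  · subst h1
    rw [Omega, if_neg one_ne_zero, if_pos rfl]
    apply Finset.sum_congr rfl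
    intro i _
    rw [ff_eq1]
    simp only
    rw [hbase i]
    have h2 : (q i + p i)/2 = q i * ((q i + p i)/(2 * q i)) := by
      have := (hq i).ne'
      field_simp
    rw [h2, mul_assoc]
  · rw [Omega, if_neg h0, if_neg h1]
    have step : ∀ i : Fin n, q i * ff t (p i / q i)
        = (t*(t-1))⁻¹ * (q i * ((q i + p i)/(2 * q i)) ^ t - q i) := by
      intro i
      rw [ff_eqg t h0 h1]
      simp only
      rw [hbase i]
      ring
    rw [Finset.sum_congr rfl (fun i _ => step i), ← Finset.mul_sum,
      Finset.sum_sub_distrib, hq1]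

lemma zeta_eq {n : ℕ} (s : ℝ) (p q : Fin n → ℝ) (hp : ∀ i, 0 < p i) (hq : ∀ i, 0 < q i) :
    zeta n s q p = ∑ i, q i * gg s (p i / q i) := by
  have hy : ∀ i, 0 < p i / q i := fun i => div_pos (hp i) (hq i)
  have h2 : ∀ i, (q i + p i)/(2 * p i) = ((1 + p i / q i)/2) / (p i / q i) := by
    intro i
    have ha := (hq i).ne'
    have hb := (hp i).ne'
    rw [div_eq_div_iff (by positivity) (div_pos (hp i) (hq i)).ne']
    field_simp
  have h3 : ∀ i, q i - p i = q i * (1 - p i / q i) := by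
    intro i
    have := (hq i).ne'
    field_simp
  by_cases hs : s = 1
  · subst hs
    rw [zeta, if_pos rfl]
    apply Finset.sum_congr rfl
    intro i _
    rw [gg_eq1]
    simp only
    have hu0 : (0:ℝ) < (1 + p i / q i)/2 := by have := hy i; linarith
    rw [h2 i, Real.log_div hu0.ne' (hy i).ne', h3 i]
    ring
  · rw [zeta, if_neg hs]
    have step : ∀ i : Fin n, q i * gg s (p i / q i)
        = (s-1)⁻¹ * ((q i - p i) * ((q i + p i)/(2 * p i)) ^ (s-1)) := by
      intro i
      rw [gg_eq s hs]
      simp only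
      have hu0 : (0:ℝ) ≤ (1 + p i / q i)/2 := by have := hy i; linarith
      have h4 : ((q i + p i)/(2 * p i)) ^ (s-1)
          = ((1 + p i / q i)/2) ^ (s-1) * ((p i / q i) ^ (s-1))⁻¹ := by
        rw [h2 i, Real.div_rpow hu0 (hy i).le, div_eq_mul_inv]
      have h5 : (p i / q i) ^ (1-s) = ((p i / q i) ^ (s-1))⁻¹ := by
        rw [show (1:ℝ)-s = -(s-1) by ring, Real.rpow_neg (hy i).le]
      rw [h4, h5, h3 i]
      ring
    rw [Finset.sum_congr rfl (fun i _ => step i), ← Finset.mul_sum]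

lemma jensen_aux {n : ℕ} {r R : ℝ} {F : ℝ → ℝ} (hconv : ConvexOn ℝ (Set.Icc r R) F)
    (hF1 : F 1 = 0) (q y : Fin n → ℝ) (hq : ∀ i, 0 ≤ q i) (hq1 : ∑ i, q i = 1)
    (hmem : ∀ i, y i ∈ Set.Icc r R) (hmean : ∑ i, q i * y i = 1) :
    0 ≤ ∑ i, q i * F (y i) := by
  have := hconv.map_sum_le (t := Finset.univ) (w := q) (p := y)
    (fun i _ => hq i) (by simpa using hq1) (fun i _ => hmem i)
  simp only [smul_eq_mul] at this
  rw [hmean, hF1] at this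
  exact this

theorem stmt_18 (s t : ℝ) (hs0 : 0 ≤ s) (hs4 : s ≤ 4) (ht : -1 ≤ t)
    (n : ℕ) (hn : 2 ≤ n) (p q : Fin n → ℝ)
    (hp : ∀ i, 0 < p i) (hq : ∀ i, 0 < q i)
    (hp1 : ∑ i, p i = 1) (hq1 : ∑ i, q i = 1)
    (r R : ℝ) (hr : 0 < r) (hrR : r ≤ R)
    (hbound : ∀ i, r ≤ p i / q i ∧ p i / q i ≤ R) :
    (1 / R ^ (s + 1)) * ((R + 1) / 2) ^ (s - t - 1) * ((4 - s) * R + s) * Omega n t q p ≤ zeta n s q p ∧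
      zeta n s q p ≤ (1 / r ^ (s + 1)) * ((r + 1) / 2) ^ (s - t - 1) * ((4 - s) * r + s) * Omega n t q p := by
  have hR : 0 < R := hr.trans_le hrR
  have hmem : ∀ i, p i / q i ∈ Set.Icc r R := fun i => ⟨(hbound i).1, (hbound i).2⟩
  have hmean : ∑ i, q i * (p i / q i) = 1 := by
    rw [← hp1]
    exact Finset.sum_congr rfl fun i _ => by rw [mul_comm, div_mul_cancel₀ _ (hq i).ne']
  have hOm := Omega_eq t p q hp hq hq1
  have hze := zeta_eq s p q hp hq
  have hAnti := hh_antitone s t r R hr hs0 hs4 ht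
  have hconstR : hh s t R = 1 / R ^ (s + 1) * ((R + 1) / 2) ^ (s - t - 1) * ((4 - s) * R + s) := by
    rw [hh, Real.rpow_neg hR.le, show (1:ℝ)+R = R+1 by ring, one_div]
    ring
  have hconstr : hh s t r = 1 / r ^ (s + 1) * ((r + 1) / 2) ^ (s - t - 1) * ((4 - s) * r + s) := by
    rw [hh, Real.rpow_neg hr.le, show (1:ℝ)+r = r+1 by ring, one_div]
    ring
  constructor
  · -- lower bound with m = hh s t R
    have hconv : ConvexOn ℝ (Set.Icc r R) (fun y => gg s y - hh s t R * ff t y) := by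
      apply convexOn_aux hr
        (f1 := fun y => gg1 s y - hh s t R * ff1 t y)
        (f2 := fun y => G2 s y - hh s t R * F2 t y)
      · exact fun y hy => (gg_hasDeriv s hy).sub ((ff_hasDeriv t hy).const_mul _)
      · exact fun y hy => (gg1_hasDeriv s hy).sub ((ff1_hasDeriv t hy).const_mul _)
      · intro y hy
        have hy0 : 0 < y := hr.trans hy.1
        have h1 : hh s t R ≤ hh s t y :=
          hAnti ⟨hy.1.le, hy.2.le⟩ ⟨hrR, le_refl R⟩ hy.2.le
        rw [G2_eq s t hy0]
        nlinarith [F2_pos t hy0]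
    have hJ := jensen_aux hconv (by rw [gg_one, ff_one]; ring) q (fun i => p i / q i)
      (fun i => (hq i).le) hq1 hmem hmean
    have expand : ∑ i, q i * (gg s (p i / q i) - hh s t R * ff t (p i / q i))
        = (∑ i, q i * gg s (p i / q i)) - hh s t R * ∑ i, q i * ff t (p i / q i) := by
      rw [Finset.mul_sum, ← Finset.sum_sub_distrib]
      exact Finset.sum_congr rfl fun i _ => by ring
    rw [expand] at hJ
    rw [hOm, hze, ← hconstR]
    linarith
  · -- upper bound with M = hh s t r
    have hconv : ConvexOn ℝ (Set.Icc r R) (fun y => hh s t r * ff t y - gg s y) := by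
      apply convexOn_aux hr
        (f1 := fun y => hh s t r * ff1 t y - gg1 s y)
        (f2 := fun y => hh s t r * F2 t y - G2 s y)
      · exact fun y hy => ((ff_hasDeriv t hy).const_mul _).sub (gg_hasDeriv s hy)
      · exact fun y hy => ((ff1_hasDeriv t hy).const_mul _).sub (gg1_hasDeriv s hy)
      · intro y hy
        have hy0 : 0 < y := hr.trans hy.1
        have h1 : hh s t y ≤ hh s t r :=
          hAnti ⟨le_refl r, hrR⟩ ⟨hy.1.le, hy.2.le⟩ hy.1.le
        rw [G2_eq s t hy0]
        nlinarith [F2_pos t hy0]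
    have hJ := jensen_aux hconv (by rw [gg_one, ff_one]; ring) q (fun i => p i / q i)
      (fun i => (hq i).le) hq1 hmem hmean
    have expand : ∑ i, q i * (hh s t r * ff t (p i / q i) - gg s (p i / q i))
        = hh s t r * (∑ i, q i * ff t (p i / q i)) - ∑ i, q i * gg s (p i / q i) := by
      rw [Finset.mul_sum, ← Finset.sum_sub_distrib]
      exact Finset.sum_congr rfl fun i _ => by ring
    rw [expand] at hJ
    rw [hOm, hze, ← hconstr]
    linarith
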